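/- For every light directed edge (u,v) of G (i.e., d(u) ≤ θ and v a neighbor of u), the probability that Algorithm 1 outputs (u,v) equals exactly 1/(3nθ), where θ = ⌈√(6m)⌉. -/

import Mathlib

open scoped ENNReal

/-- **Algorithm 1** of Eden–Rosenbaum / Tětek–Thorup, as a probability mass function on
`Option (V × V)`: draw `u` uniformly from `V`, draw `j` uniformly from `{0, …, θ−1}`,
and draw `B ∈ {0,1}` with `P(B = 1) = 1/3`, independently; if `d(u) > θ` or `j ≥ d(u)`,
output `none` (Fail); otherwise set `v = nbr u j`; if `B = 1`, output the directed edge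
`(u, v)`; if `B = 0` and `v` is heavy (`d(v) > θ`), draw `w` uniformly from the neighbors
of `v` and output `(v, w)`; in all other cases output `none`. -/
noncomputable def alg1 {V : Type*} [Fintype V] [DecidableEq V] [Nonempty V]
    (G : SimpleGraph V) [DecidableRel G.Adj] (θ : ℕ) (hθ : 0 < θ)
    (nbr : V → ℕ → V) : PMF (Option (V × V)) :=
  (PMF.uniformOfFintype V).bind fun u =>
    (PMF.uniformOfFinset (Finset.range θ) (Finset.nonempty_range_iff.mpr hθ.ne')).bind
      fun j =>
        (PMF.bernoulli (1 / 3) (by rw [← NNReal.coe_le_coe]; push_cast; norm_num)).bind fun B =>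
          if θ < G.degree u ∨ G.degree u ≤ j then PMF.pure none
          else
            if B then PMF.pure (some (u, nbr u j))
            else
              if h : θ < G.degree (nbr u j) then
                (PMF.uniformOfFinset (G.neighborFinset (nbr u j))
                  (Finset.card_pos.mp (Nat.lt_of_le_of_lt (Nat.zero_le θ) h))).bind
                  fun w => PMF.pure (some (nbr u j, w))
              else PMF.pure none

/-- For every light directed edge `(u,v)` of `G` (i.e., `d(u) ≤ θ` and
`v` a neighbor of `u`), the probability that Algorithm 1 outputs `(u,v)` equals exactly
`1/(3nθ)`, where `θ = ⌈√(6m)⌉`. -/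
theorem alg1_light_edge_prob {V : Type*} [Fintype V] [DecidableEq V] [Nonempty V]
    (G : SimpleGraph V) [DecidableRel G.Adj]
    (hm : 1 ≤ G.edgeFinset.card)
    (θ : ℕ) (hθ : θ = ⌈Real.sqrt (6 * (G.edgeFinset.card : ℝ))⌉₊)
    (nbr : V → ℕ → V)
    (hnbr : ∀ u : V, Set.BijOn (nbr u) (Set.Iio (G.degree u)) (G.neighborSet u))
    (u v : V) (huv : G.Adj u v) (hlight : G.degree u ≤ θ) :
    alg1 G θ
      (by subst hθ
          refine Nat.ceil_pos.mpr (Real.sqrt_pos.mpr ?_)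
          exact_mod_cast Nat.mul_pos (by norm_num) hm)
      nbr (some (u, v))
      = 1 / (3 * (Fintype.card V : ℝ≥0∞) * (θ : ℝ≥0∞)) := by
  classical
  have hθpos : 0 < θ := by
    subst hθ
    refine Nat.ceil_pos.mpr (Real.sqrt_pos.mpr ?_)
    exact_mod_cast Nat.mul_pos (by norm_num) hm
  obtain ⟨j₀, hj₀, hnv⟩ : ∃ j, j < G.degree u ∧ nbr u j = v := by
    obtain ⟨j, hj, hj'⟩ := (hnbr u).surjOn (show v ∈ G.neighborSet u from huv)
    exact ⟨j, hj, hj'⟩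
  have hune : u ≠ v := G.ne_of_adj huv
  have hnheavy : ¬ θ < G.degree u := not_lt.mpr hlight
  -- inner bernoulli computation
  have hinner : ∀ (u' : V) (j : ℕ),
      ((PMF.bernoulli (1 / 3) (by rw [← NNReal.coe_le_coe]; push_cast; norm_num)).bind fun B =>
          if θ < G.degree u' ∨ G.degree u' ≤ j then PMF.pure none
          else
            if B then PMF.pure (some (u', nbr u' j))
            else
              if h : θ < G.degree (nbr u' j) then
                (PMF.uniformOfFinset (G.neighborFinset (nbr u' j))
                  (Finset.card_pos.mp (Nat.lt_of_le_of_lt (Nat.zero_le θ) h))).bind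
                  fun w => PMF.pure (some (nbr u' j, w))
              else PMF.pure none) (some (u, v))
      = if u' = u ∧ j = j₀ then (3 : ℝ≥0∞)⁻¹ else 0 := by
    intro u' j
    rw [PMF.bind_apply, tsum_bool]
    by_cases hcond : θ < G.degree u' ∨ G.degree u' ≤ j
    · have hrhs : ¬ (u' = u ∧ j = j₀) := by
        rintro ⟨rfl, rfl⟩
        rcases hcond with h | h
        · exact hnheavy h
        · exact absurd hj₀ (not_lt.mpr h)
      simp [hcond, hrhs, PMF.pure_apply]
    · push_neg at hcond
      obtain ⟨hc1, hc2⟩ := hcond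
      have hcond' : ¬ (θ < G.degree u' ∨ G.degree u' ≤ j) := by
        push_neg; exact ⟨hc1, hc2⟩
      -- the B = false branch contributes 0
      have hfalse : ((if θ < G.degree u' ∨ G.degree u' ≤ j then PMF.pure none
          else
            if (false : Bool) then PMF.pure (some (u', nbr u' j))
            else
              if h : θ < G.degree (nbr u' j) then
                (PMF.uniformOfFinset (G.neighborFinset (nbr u' j))
                  (Finset.card_pos.mp (Nat.lt_of_le_of_lt (Nat.zero_le θ) h))).bind
                  fun w => PMF.pure (some (nbr u' j, w))
              else PMF.pure none) : PMF (Option (V × V))) (some (u, v)) = 0 := by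
        rw [if_neg hcond', if_neg (by simp)]
        by_cases hh : θ < G.degree (nbr u' j)
        · rw [dif_pos hh, PMF.bind_apply]
          have hne : nbr u' j ≠ u := by
            rintro rfl
            exact hnheavy hh
          refine ENNReal.tsum_eq_zero.mpr fun w => ?_
          rw [PMF.pure_apply, if_neg (by simp [Ne.symm hne]), mul_zero]
        · rw [dif_neg hh, PMF.pure_apply, if_neg (by simp)]
      rw [hfalse, mul_zero, zero_add]
      rw [if_neg hcond', if_pos rfl, PMF.pure_apply, PMF.bernoulli_apply]
      by_cases hu' : u' = u
      · rw [hu'] at hc2 ⊢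
        by_cases hjj : j = j₀
        · subst hjj
          rw [if_pos (by simp [hnv]), if_pos ⟨rfl, rfl⟩]
          norm_num
        · have : ¬ some (u, v) = some (u, nbr u j) := by
            simp only [Option.some.injEq, Prod.mk.injEq, true_and]
            intro hv
            exact hjj ((hnbr u).injOn (Set.mem_Iio.mpr hc2) (Set.mem_Iio.mpr hj₀)
              (by rw [hnv, hv]))
          rw [if_neg this, mul_zero, if_neg (by simp [hjj])]
      · rw [if_neg (by simp [Ne.symm hu']), mul_zero, if_neg (by simp [hu'])]
  rw [alg1, PMF.bind_apply]
  have hmid : ∀ u' : V,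
      ((PMF.uniformOfFinset (Finset.range θ) (Finset.nonempty_range_iff.mpr hθpos.ne')).bind
        fun j =>
          (PMF.bernoulli (1 / 3) (by rw [← NNReal.coe_le_coe]; push_cast; norm_num)).bind fun B =>
            if θ < G.degree u' ∨ G.degree u' ≤ j then PMF.pure none
            else
              if B then PMF.pure (some (u', nbr u' j))
              else
                if h : θ < G.degree (nbr u' j) then
                  (PMF.uniformOfFinset (G.neighborFinset (nbr u' j))
                    (Finset.card_pos.mp (Nat.lt_of_le_of_lt (Nat.zero_le θ) h))).bind
                    fun w => PMF.pure (some (nbr u' j, w))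
                else PMF.pure none) (some (u, v))
      = if u' = u then (θ : ℝ≥0∞)⁻¹ * (3 : ℝ≥0∞)⁻¹ else 0 := by
    intro u'
    rw [PMF.bind_apply]
    by_cases hu' : u' = u
    · subst hu'
      rw [if_pos rfl]
      rw [tsum_eq_single j₀ (fun j hj => by
        rw [hinner, if_neg (by simp [hj]), mul_zero])]
      rw [hinner, if_pos ⟨rfl, rfl⟩, PMF.uniformOfFinset_apply,
        if_pos (Finset.mem_range.mpr (lt_of_lt_of_le hj₀ hlight)), Finset.card_range]
    · rw [if_neg hu']
      refine ENNReal.tsum_eq_zero.mpr fun j => ?_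
      rw [hinner, if_neg (by simp [hu']), mul_zero]
  rw [tsum_eq_single u (fun u' hu' => by rw [hmid, if_neg hu', mul_zero])]
  rw [hmid, if_pos rfl, PMF.uniformOfFintype_apply]
  have h3 : (3 : ℝ≥0∞) ≠ 0 := by norm_num
  have h3t : (3 : ℝ≥0∞) ≠ ⊤ := by norm_num
  have hn0 : (Fintype.card V : ℝ≥0∞) ≠ 0 := by
    simp [Fintype.card_ne_zero]
  have hnt : (Fintype.card V : ℝ≥0∞) ≠ ⊤ := ENNReal.natCast_ne_top _
  have hθ0 : (θ : ℝ≥0∞) ≠ 0 := by exact_mod_cast hθpos.ne'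
  rw [one_div, ENNReal.mul_inv (Or.inl (mul_ne_zero h3 hn0)) (Or.inr hθ0),
    ENNReal.mul_inv (Or.inl h3) (Or.inr hn0)]
  ring
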